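/- Let A ⊂ B(X) be a strongly closed unital algebra with complemented invariant subspace lattice. If Q ∈ A' is nilpotent (Q^m = 0 for some m ∈ ℕ), then Q ∈ (algLat A)'. -/

import Mathlib

open Filter Topology NormedSpace

set_option linter.unusedSectionVars false

section Stmt8Aux
variable {X : Type*} [NormedAddCommGroup X] [NormedSpace ℂ X] [CompleteSpace X]

/-- A projection commutes with any operator preserving both complementary subspaces. -/
lemma stmt8_proj_comm {K Kc : Submodule ℂ X} (h : IsCompl K Kc) (E : X →L[ℂ] X)
    (hEK : ∀ x ∈ K, E x = x) (hEKc : ∀ x ∈ Kc, E x = 0)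
    (c : X →L[ℂ] X) (hcK : ∀ x ∈ K, c x ∈ K) (hcKc : ∀ x ∈ Kc, c x ∈ Kc) :
    c * E = E * c := by
  ext x
  obtain ⟨y, z, hy, hz, rfl⟩ := Submodule.codisjoint_iff_exists_add_eq.mp h.codisjoint x
  simp only [ContinuousLinearMap.mul_apply, map_add, hEK y hy, hEKc z hz,
    hEK _ (hcK y hy), hEKc _ (hcKc z hz), map_zero, add_zero]

/-- Existence of a continuous projection onto a closed complemented subspace. -/
lemma stmt8_exists_proj {K Kc : Submodule ℂ X} (h : IsCompl K Kc)
    (hK : IsClosed (K : Set X)) (hKc : IsClosed (Kc : Set X)) :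
    ∃ E : X →L[ℂ] X, (∀ x ∈ K, E x = x) ∧ (∀ x ∈ Kc, E x = 0) ∧ (∀ x, E x ∈ K) := by
  refine ⟨K.subtypeL.comp (K.linearProjOfClosedCompl Kc h hK hKc), ?_, ?_, ?_⟩
  · intro x hx
    have := Submodule.linearProjOfIsCompl_apply_left h ⟨x, hx⟩
    simp [Submodule.coe_continuous_linearProjOfClosedCompl', this]
  · intro x hx
    have := Submodule.linearProjOfIsCompl_apply_right' h hx
    simp [Submodule.coe_continuous_linearProjOfClosedCompl', this]
  · intro x
    simp

lemma stmt8_comm_mem (A : Subalgebra ℂ (X →L[ℂ] X))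
    (Q : X →L[ℂ] X) (hQA : ∀ a ∈ A, Q * a = a * Q)
    (b : X →L[ℂ] X)
    (hb : ∀ K : Submodule ℂ X, IsClosed (K : Set X) → (∀ a ∈ A, ∀ x ∈ K, a x ∈ K) →
      ∀ x ∈ K, b x ∈ K)
    (K : Submodule ℂ X) (hK : IsClosed (K : Set X)) (hKA : ∀ a ∈ A, ∀ x ∈ K, a x ∈ K)
    (x : X) (hx : x ∈ K) : (Q * b - b * Q) x ∈ K := by
  set g : ℂ → X := fun t => (exp (t • (-Q)) * b * exp (t • Q)) x with hg
  -- every value of g lies in K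
  have hgK : ∀ t : ℂ, g t ∈ K := by
    intro t
    have hinv : exp (t • (-Q)) * exp (t • Q) = 1 := by
      letI : NormedAlgebra ℚ (X →L[ℂ] X) := NormedAlgebra.restrictScalars ℚ ℂ (X →L[ℂ] X)
      rw [← exp_add_of_commute ((((Commute.refl Q).neg_left).smul_left t).smul_right t)]
      simp [← add_smul]
    set f := exp (t • (-Q)) with hf
    set K' : Submodule ℂ X := K.comap (f : X →ₗ[ℂ] X) with hK'
    have hK'mem : ∀ y : X, y ∈ K' ↔ f y ∈ K := fun y => Iff.rfl
    have hK'c : IsClosed (K' : Set X) := hK.preimage f.continuous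
    have hK'A : ∀ a ∈ A, ∀ y ∈ K', a y ∈ K' := by
      intro a ha y hy
      have hcomm : f * a = a * f := by
        have hc : Commute Q (a : X →L[ℂ] X) := hQA a ha
        have : Commute (t • (-Q)) (a : X →L[ℂ] X) := (hc.neg_left).smul_left t
        exact (this.exp_left)
      have : f (a y) = a (f y) := by
        have := congrArg (fun T : X →L[ℂ] X => T y) hcomm
        simpa using this
      rw [hK'mem, this]
      exact hKA a ha _ hy
    have hxK' : exp (t • Q) x ∈ K' := by
      rw [hK'mem]
      have : f (exp (t • Q) x) = (f * exp (t • Q)) x := rfl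
      rw [this, hinv]
      simpa using hx
    have := hb K' hK'c hK'A _ hxK'
    rw [hK'mem] at this
    exact this
  -- g has derivative (b*Q - Q*b) x at 0
  have hder : HasDerivAt g ((b * Q - Q * b) x) 0 := by
    have h1 : HasDerivAt (fun t : ℂ => exp (t • (-Q)))
        (exp ((0:ℂ) • (-Q)) * (-Q)) 0 := hasDerivAt_exp_smul_const (-Q) 0
    have h2 : HasDerivAt (fun t : ℂ => exp (t • Q))
        (exp ((0:ℂ) • Q) * Q) 0 := hasDerivAt_exp_smul_const Q 0
    have h3 := (h1.mul_const b).mul h2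
    have h4 := h3.clm_apply (hasDerivAt_const (0:ℂ) x)
    simp only [zero_smul, exp_zero, one_mul, mul_one, ContinuousLinearMap.zero_apply, map_zero,
      ContinuousLinearMap.add_apply] at h4 ⊢
    convert h4 using 1
    · rfl
    simp [ContinuousLinearMap.sub_apply, ContinuousLinearMap.add_apply,
      ContinuousLinearMap.mul_apply, ContinuousLinearMap.neg_apply]
    abel
  -- closedness: the derivative is a limit of slopes lying in K
  have hslope : ∀ t : ℂ, slope g 0 t ∈ K := by
    intro t
    rw [slope_def_module]
    exact K.smul_mem _ (K.sub_mem (hgK t) (hgK 0))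
  have hmem : (b * Q - Q * b) x ∈ K := by
    have htend := hasDerivAt_iff_tendsto_slope.mp hder
    exact hK.mem_of_tendsto htend (Eventually.of_forall fun t => hslope t)
  have : (Q * b - b * Q) x = -((b * Q - Q * b) x) := by
    simp [ContinuousLinearMap.sub_apply]
  rw [this]
  exact K.neg_mem hmem

lemma stmt8_main (A : Subalgebra ℂ (X →L[ℂ] X))
    (hCISL : ∀ K : Submodule ℂ X, IsClosed (K : Set X) → (∀ a ∈ A, ∀ x ∈ K, a x ∈ K) →
      ∃ Kc : Submodule ℂ X, IsClosed (Kc : Set X) ∧ (∀ a ∈ A, ∀ x ∈ Kc, a x ∈ Kc) ∧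
        IsCompl K Kc)
    (b : X →L[ℂ] X)
    (hb : ∀ K : Submodule ℂ X, IsClosed (K : Set X) → (∀ a ∈ A, ∀ x ∈ K, a x ∈ K) →
      ∀ x ∈ K, b x ∈ K) :
    ∀ (m : ℕ) (Q : X →L[ℂ] X), (∀ a ∈ A, Q * a = a * Q) → Q ^ m = 0 → Q * b = b * Q := by
  intro m
  induction m with
  | zero =>
    intro Q _ h0
    have h1 : (1 : X →L[ℂ] X) = 0 := by simpa using h0
    have : Subsingleton (X →L[ℂ] X) := subsingleton_of_zero_eq_one h1.symm
    exact Subsingleton.elim _ _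
  | succ m ih =>
    intro Q hQA hQm
    rcases Nat.eq_zero_or_pos m with rfl | hm
    · have : Q = 0 := by simpa using hQm
      simp [this]
    -- main case : m ≥ 1, Q ^ (m+1) = 0
    obtain ⟨k, rfl⟩ : ∃ k, m = k + 1 := ⟨m - 1, (Nat.succ_pred_eq_of_pos hm).symm⟩
    set m' := k + 1 with hm'  -- m = m' ≥ 1, Q^(m'+1) = 0
    -- kernels of powers of Q are closed and A-invariant
    have hkerA : ∀ j : ℕ, ∀ a ∈ A, ∀ x ∈ (Q ^ j).ker, a x ∈ (Q ^ j).ker := by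
      intro j a ha x hx
      have hc0 : Commute Q a := hQA a ha
      have hc : (Q ^ j) * a = a * (Q ^ j) := hc0.pow_left j
      rw [LinearMap.mem_ker, ContinuousLinearMap.coe_coe] at hx ⊢
      have : (Q ^ j) (a x) = a ((Q ^ j) x) := by
        have := congrArg (fun T : X →L[ℂ] X => T x) hc
        simpa using this
      rw [this, hx, map_zero]
    have hkerC : ∀ j : ℕ, IsClosed (((Q ^ j).ker : Submodule ℂ X) : Set X) :=
      fun j => ContinuousLinearMap.isClosed_ker _
    -- projections onto ker Q and ker Q^m'
    obtain ⟨Kc₁, hKc₁c, hKc₁A, hcompl₁⟩ := hCISL (Q.ker) (ContinuousLinearMap.isClosed_ker Q)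
      (by intro a ha x hx; have := hkerA 1 a ha x (by simpa using hx); simpa using this)
    obtain ⟨E₁, hE₁K, hE₁Kc, hE₁mem⟩ := stmt8_exists_proj hcompl₁ (ContinuousLinearMap.isClosed_ker Q) hKc₁c
    obtain ⟨Kc₂, hKc₂c, hKc₂A, hcompl₂⟩ := hCISL ((Q ^ m').ker) (hkerC m') (hkerA m')
    obtain ⟨E₂, hE₂K, hE₂Kc, hE₂mem⟩ := stmt8_exists_proj hcompl₂ (hkerC m') hKc₂c
    -- projections commute with members of A and with b
    have hE₁A : ∀ a ∈ A, a * E₁ = E₁ * a := fun a ha =>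
      stmt8_proj_comm hcompl₁ E₁ hE₁K hE₁Kc a
        (by intro x hx; have := hkerA 1 a ha x (by simpa using hx); simpa using this)
        (hKc₁A a ha)
    have hE₂A : ∀ a ∈ A, a * E₂ = E₂ * a := fun a ha =>
      stmt8_proj_comm hcompl₂ E₂ hE₂K hE₂Kc a (hkerA m' a ha) (hKc₂A a ha)
    have hbK₁ : ∀ x ∈ Q.ker, b x ∈ Q.ker := by
      intro x hx
      have := hb (Q.ker) (ContinuousLinearMap.isClosed_ker Q)
        (by intro a ha y hy; have := hkerA 1 a ha y (by simpa using hy); simpa using this) x hx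
      exact this
    have hbE₁ : b * E₁ = E₁ * b :=
      stmt8_proj_comm hcompl₁ E₁ hE₁K hE₁Kc b hbK₁ (hb Kc₁ hKc₁c hKc₁A)
    have hbE₂ : b * E₂ = E₂ * b :=
      stmt8_proj_comm hcompl₂ E₂ hE₂K hE₂Kc b (hb _ (hkerC m') (hkerA m')) (hb Kc₂ hKc₂c hKc₂A)
    -- basic identities
    have hQE₁ : Q * E₁ = 0 := by
      ext x
      have := hE₁mem x
      rw [LinearMap.mem_ker, ContinuousLinearMap.coe_coe] at this
      simpa [ContinuousLinearMap.mul_apply] using this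
    have hE₂Q : E₂ * Q = Q := by
      ext x
      have hQx : Q x ∈ (Q ^ m').ker := by
        rw [LinearMap.mem_ker, ContinuousLinearMap.coe_coe]
        have h1 : (Q ^ m') (Q x) = (Q ^ m' * Q) x := rfl
        rw [h1, ← pow_succ, hQm]
        simp
      simpa [ContinuousLinearMap.mul_apply] using hE₂K _ hQx
    have hE₁Qm : E₁ * Q ^ m' = Q ^ m' := by
      ext x
      have hQx : (Q ^ m') x ∈ Q.ker := by
        rw [LinearMap.mem_ker, ContinuousLinearMap.coe_coe]
        have h1 : Q ((Q ^ m') x) = (Q * Q ^ m') x := rfl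
        rw [h1, ← pow_succ', hQm]; simp
      simpa [ContinuousLinearMap.mul_apply] using hE₁K _ hQx
    have hQmE₂ : Q ^ m' * E₂ = 0 := by
      ext x
      have := hE₂mem x
      rw [LinearMap.mem_ker, ContinuousLinearMap.coe_coe] at this
      simpa [ContinuousLinearMap.mul_apply] using this
    -- R₂ := Q * E₂ is nilpotent of order m' and commutes with A
    have hR₂pow : ∀ j : ℕ, (Q * E₂) ^ (j + 1) = Q ^ (j + 1) * E₂ := by
      intro j
      induction j with
      | zero => simp
      | succ n ihn =>
        have hE₂Qp : E₂ * Q ^ (n + 1) = Q ^ (n + 1) := by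
          rw [pow_succ', ← mul_assoc, hE₂Q]
        calc (Q * E₂) ^ (n + 2) = (Q * E₂) ^ (n + 1) * (Q * E₂) := by rw [pow_succ]
          _ = Q ^ (n + 1) * E₂ * (Q * E₂) := by rw [ihn]
          _ = Q ^ (n + 1) * (E₂ * Q) * E₂ := by rw [mul_assoc, mul_assoc, mul_assoc]
          _ = Q ^ (n + 2) * E₂ := by rw [hE₂Q, ← pow_succ]
    have hR₂A : ∀ a ∈ A, (Q * E₂) * a = a * (Q * E₂) := by
      intro a ha
      rw [mul_assoc, ← hE₂A a ha, ← mul_assoc, hQA a ha, mul_assoc]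
    have hR₂nil : (Q * E₂) ^ m' = 0 := by
      rw [hm', hR₂pow k, ← hm', hQmE₂]
    have h4 := ih (Q * E₂) hR₂A hR₂nil
    -- R₁ := (1 - E₁) * Q is nilpotent of order m' and commutes with A
    have hQ1E₁ : Q * (1 - E₁) = Q := by rw [mul_sub, mul_one, hQE₁, sub_zero]
    have hR₁pow : ∀ j : ℕ, ((1 - E₁) * Q) ^ (j + 1) = (1 - E₁) * Q ^ (j + 1) := by
      intro j
      induction j with
      | zero => simp
      | succ n ihn =>
        have hp : Q ^ (n + 1) * (1 - E₁) = Q ^ (n + 1) := by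
          rw [pow_succ, mul_assoc, hQ1E₁]
        calc ((1 - E₁) * Q) ^ (n + 2) = ((1 - E₁) * Q) ^ (n + 1) * ((1 - E₁) * Q) := by rw [pow_succ]
          _ = (1 - E₁) * Q ^ (n + 1) * ((1 - E₁) * Q) := by rw [ihn]
          _ = (1 - E₁) * (Q ^ (n + 1) * (1 - E₁)) * Q := by noncomm_ring
          _ = (1 - E₁) * Q ^ (n + 1) * Q := by rw [hp]
          _ = (1 - E₁) * Q ^ (n + 2) := by rw [mul_assoc, ← pow_succ]
    have hR₁A : ∀ a ∈ A, ((1 - E₁) * Q) * a = a * ((1 - E₁) * Q) := by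
      intro a ha
      have h1 : (1 - E₁) * a = a * (1 - E₁) := by
        rw [sub_mul, mul_sub, one_mul, mul_one, hE₁A a ha]
      rw [mul_assoc, hQA a ha, ← mul_assoc, h1, mul_assoc]
    have hR₁nil : ((1 - E₁) * Q) ^ m' = 0 := by
      rw [hm', hR₁pow k, ← hm', sub_mul, one_mul, hE₁Qm, sub_self]
    have h6 := ih ((1 - E₁) * Q) hR₁A hR₁nil
    -- set D
    set D := Q * b - b * Q with hD
    -- D * E₂ = 0
    have hDE₂ : D * E₂ = 0 := by
      have : Q * E₂ * b = b * (Q * E₂) := h4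
      rw [mul_assoc, ← hbE₂, ← mul_assoc] at this
      -- this : Q * b * E₂ = b * (Q * E₂)
      rw [hD, sub_mul, mul_assoc b Q E₂, ← this, sub_self]
    -- D = E₁ * D
    have hE₁D : E₁ * D = D := by
      have e2 : b * ((1 - E₁) * Q) = b * Q - E₁ * (b * Q) := by
        rw [sub_mul, one_mul, mul_sub, ← mul_assoc b E₁ Q, hbE₁, mul_assoc E₁ b Q]
      rw [mul_assoc, sub_mul, one_mul, e2] at h6
      -- h6 : Q * b - E₁ * (Q * b) = b * Q - E₁ * (b * Q)
      rw [hD, mul_sub]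
      exact (sub_eq_sub_iff_sub_eq_sub.mp h6).symm
    -- Q kills the range of D
    have hQD : ∀ x, Q (D x) = 0 := by
      intro x
      have h1 : D x = E₁ (D x) := by
        have := congrArg (fun T : X →L[ℂ] X => T x) hE₁D
        simpa using this.symm
      rw [h1]
      have h2 := hE₁mem (D x)
      rwa [LinearMap.mem_ker, ContinuousLinearMap.coe_coe] at h2
    have hE₂D : E₂ * D = D := by
      ext x
      have hmem : D x ∈ (Q ^ m').ker := by
        rw [LinearMap.mem_ker, ContinuousLinearMap.coe_coe, hm', pow_succ]
        have h1 : (Q ^ k * Q) (D x) = (Q ^ k) (Q (D x)) := rfl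
        rw [h1, hQD, map_zero]
      simpa using hE₂K _ hmem
    -- D commutes with E₂ since D leaves every closed A-invariant subspace invariant
    have hDE₂comm : D * E₂ = E₂ * D := by
      refine stmt8_proj_comm hcompl₂ E₂ hE₂K hE₂Kc D ?_ ?_
      · intro x hx; exact stmt8_comm_mem A Q hQA b hb _ (hkerC m') (hkerA m') x hx
      · intro x hx; exact stmt8_comm_mem A Q hQA b hb Kc₂ hKc₂c hKc₂A x hx
    have hD0 : D = 0 := by rw [← hE₂D, ← hDE₂comm, hDE₂]
    exact sub_eq_zero.mp hD0

end Stmt8Aux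

/-- If `A` is a strongly closed unital algebra with complemented invariant
subspace lattice and `Q ∈ A'` satisfies nilpotent (`Q^m = 0` for some `m`), then `Q` commutes with every operator in
`algLat A`. -/
theorem stmt8 {X : Type*} [NormedAddCommGroup X] [NormedSpace ℂ X] [CompleteSpace X]
    (A : Subalgebra ℂ (X →L[ℂ] X))
    (hA : IsClosed ((fun a : X →L[ℂ] X => (a : X → X)) '' (A : Set (X →L[ℂ] X))))
    (hCISL : ∀ K : Submodule ℂ X, IsClosed (K : Set X) → (∀ a ∈ A, ∀ x ∈ K, a x ∈ K) →
      ∃ Kc : Submodule ℂ X, IsClosed (Kc : Set X) ∧ (∀ a ∈ A, ∀ x ∈ Kc, a x ∈ Kc) ∧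
        IsCompl K Kc)
    (Q : X →L[ℂ] X) (hQA : ∀ a ∈ A, Q * a = a * Q) (hQ2 : IsNilpotent Q)
    (b : X →L[ℂ] X)
    (hb : ∀ K : Submodule ℂ X, IsClosed (K : Set X) → (∀ a ∈ A, ∀ x ∈ K, a x ∈ K) →
      ∀ x ∈ K, b x ∈ K) :
    Q * b = b * Q := by
  obtain ⟨m, hm⟩ := hQ2
  exact stmt8_main A hCISL b hb m Q hQA hm
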